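/- Let V be an inner product space carrying anticommuting square-zero operators ∂, ∂̄ with adjoints, satisfying the Kähler identities so that the Laplacians Δ = dd* + d*d (d = ∂+∂̄), Δ_∂ and Δ_∂̄ have pairwise equal kernels, and suppose Hodge decompositions hold: V = Ker Δ_∂ ⊕ Im ∂ ⊕ Im ∂* and V = Ker Δ_∂̄ ⊕ Im ∂̄ ⊕ Im ∂̄*, with V = Ker Δ ⊕ Im d ⊕ Im d*. Then any form α that is ∂-closed, ∂̄-closed and d-exact lies in Im(∂∂̄). -/

import Mathlib

open LinearMap

lemma adj_symm' {V : Type*} [NormedAddCommGroup V] [InnerProductSpace ℂ V]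
    (A As : V →ₗ[ℂ] V) (hadj : ∀ x y : V, (inner ℂ (A x) y : ℂ) = inner ℂ x (As y))
    (x y : V) : (inner ℂ (As x) y : ℂ) = inner ℂ x (A y) := by
  rw [← inner_conj_symm, ← hadj, inner_conj_symm]

lemma as_zero' {V : Type*} [NormedAddCommGroup V] [InnerProductSpace ℂ V]
    (A As : V →ₗ[ℂ] V) (hadj : ∀ x y : V, (inner ℂ (A x) y : ℂ) = inner ℂ x (As y))
    (z : V) (hz : A (As z) = 0) : As z = 0 := by
  have h1 : (inner ℂ (As z) (As z) : ℂ) = 0 := by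
    rw [← hadj, hz, inner_zero_left]
  exact inner_self_eq_zero.mp h1

lemma harm_parts' {V : Type*} [NormedAddCommGroup V] [InnerProductSpace ℂ V]
    (A As : V →ₗ[ℂ] V) (hadj : ∀ x y : V, (inner ℂ (A x) y : ℂ) = inner ℂ x (As y))
    (h : V) (hh : A (As h) + As (A h) = 0) : A h = 0 ∧ As h = 0 := by
  have e1 : (inner ℂ (A (As h)) h : ℂ) = inner ℂ (As h) (As h) := hadj _ _
  have e2 : (inner ℂ (As (A h)) h : ℂ) = inner ℂ (A h) (A h) := adj_symm' A As hadj _ _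
  have e3 : (inner ℂ (As h) (As h) : ℂ) + inner ℂ (A h) (A h) = 0 := by
    rw [← e1, ← e2, ← inner_add_left, hh, inner_zero_left]
  rw [inner_self_eq_norm_sq_to_K, inner_self_eq_norm_sq_to_K] at e3
  have e4 : (‖As h‖ ^ 2 + ‖A h‖ ^ 2 : ℝ) = 0 := by
    have h5 : ((‖As h‖ ^ 2 + ‖A h‖ ^ 2 : ℝ) : ℂ) = 0 := by push_cast; exact e3
    exact_mod_cast h5
  constructor
  · have : ‖A h‖ = 0 := by nlinarith [sq_nonneg ‖As h‖, sq_nonneg ‖A h‖, norm_nonneg (A h), norm_nonneg (As h)]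
    simpa using this
  · have : ‖As h‖ = 0 := by nlinarith [norm_nonneg (A h), norm_nonneg (As h)]
    simpa using this


/- STATEMENT 19: (Abstract Hodge-theoretic core of the ∂∂̄-lemma for homologically
orientable transversely Kähler foliations on compact manifolds.)  Let V be an inner
product space with anticommuting square-zero operators ∂ (= p), ∂̄ (= pb) and adjoints
∂* (= ps), ∂̄* (= pbs); set d = ∂ + ∂̄, d* = ∂* + ∂̄*, and let
Δ = dd* + d*d, Δ_∂ = ∂∂* + ∂*∂, Δ_∂̄ = ∂̄∂̄* + ∂̄*∂̄.  Assume the Kähler identities,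
so that Ker Δ = Ker Δ_∂ = Ker Δ_∂̄ and ∂̄∂* = -∂*∂̄, and that the Hodge decompositions
hold: V = Ker Δ_∂ ⊕ Im ∂ ⊕ Im ∂*, V = Ker Δ_∂̄ ⊕ Im ∂̄ ⊕ Im ∂̄*,
V = Ker Δ ⊕ Im d ⊕ Im d*.  Then every ∂-closed, ∂̄-closed, d-exact α lies in Im(∂∂̄). -/
theorem del_delbar_lemma_from_hodge_theory
    {V : Type*} [NormedAddCommGroup V] [InnerProductSpace ℂ V]
    (p pb ps pbs : V →ₗ[ℂ] V)
    (hpsq : p ∘ₗ p = 0) (hpbsq : pb ∘ₗ pb = 0)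
    (hanti : p ∘ₗ pb + pb ∘ₗ p = 0)
    (hadj : ∀ x y : V, (inner ℂ (p x) y : ℂ) = inner ℂ x (ps y))
    (hadjb : ∀ x y : V, (inner ℂ (pb x) y : ℂ) = inner ℂ x (pbs y))
    (hker1 : ker ((p + pb) ∘ₗ (ps + pbs) + (ps + pbs) ∘ₗ (p + pb)) =
      ker (p ∘ₗ ps + ps ∘ₗ p))
    (hker2 : ker (p ∘ₗ ps + ps ∘ₗ p) = ker (pb ∘ₗ pbs + pbs ∘ₗ pb))
    (hcomm : pb ∘ₗ ps = -(ps ∘ₗ pb))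
    (hdec : ker (p ∘ₗ ps + ps ∘ₗ p) ⊔ range p ⊔ range ps = ⊤)
    (hdecb : ker (pb ∘ₗ pbs + pbs ∘ₗ pb) ⊔ range pb ⊔ range pbs = ⊤)
    (hdecd : ker ((p + pb) ∘ₗ (ps + pbs) + (ps + pbs) ∘ₗ (p + pb)) ⊔
        range (p + pb) ⊔ range (ps + pbs) = ⊤) :
    ∀ α : V, p α = 0 → pb α = 0 → α ∈ range (p + pb) → α ∈ range (p ∘ₗ pb) := by
    -- pointwise versions of operator identities
  have hp2 : ∀ z : V, p (p z) = 0 := fun z => by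
    have := DFunLike.congr_fun hpsq z
    simpa using this
  have hpb2 : ∀ z : V, pb (pb z) = 0 := fun z => by
    have := DFunLike.congr_fun hpbsq z
    simpa using this
  have hanti' : ∀ z : V, p (pb z) = - pb (p z) := fun z => by
    have := DFunLike.congr_fun hanti z
    simp only [LinearMap.add_apply, LinearMap.comp_apply, LinearMap.zero_apply] at this
    exact eq_neg_of_add_eq_zero_left this
  have hcomm' : ∀ z : V, pb (ps z) = - ps (pb z) := fun z => by
    have := DFunLike.congr_fun hcomm z
    simpa using this
  intro α hpα hpbα hd
  obtain ⟨β, hβ⟩ := hd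
  -- decompose α w.r.t. the ∂̄-Laplacian
  have hmem : α ∈ ker (pb ∘ₗ pbs + pbs ∘ₗ pb) ⊔ range pb ⊔ range pbs := by
    rw [hdecb]; trivial
  rw [Submodule.mem_sup] at hmem
  obtain ⟨w, hw, c, hc, hsum⟩ := hmem
  rw [Submodule.mem_sup] at hw
  obtain ⟨h, hh, bx, hbx, rfl⟩ := hw
  obtain ⟨y, rfl⟩ := hc
  obtain ⟨x, rfl⟩ := hbx
  -- harmonic facts for h
  have hhb : pb (pbs h) + pbs (pb h) = 0 := by
    have := (mem_ker).mp hh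
    simpa using this
  obtain ⟨hpbh, hpbsh⟩ := harm_parts' pb pbs hadjb h hhb
  have hh' : h ∈ ker (p ∘ₗ ps + ps ∘ₗ p) := by rw [hker2]; exact hh
  have hhp : p (ps h) + ps (p h) = 0 := by
    have := (mem_ker).mp hh'
    simpa using this
  obtain ⟨hph, hpsh⟩ := harm_parts' p ps hadj h hhp
  -- ∂̄* y = 0
  have hpbsy : pbs y = 0 := by
    apply as_zero' pb pbs hadjb
    have h1 : pb α = pb h + pb (pb x) + pb (pbs y) := by
      rw [← hsum]; simp [map_add]
    rw [hpbα, hpbh, hpb2] at h1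
    simpa using h1.symm
  -- h = 0
  have hαh : (inner ℂ α h : ℂ) = 0 := by
    rw [← hβ, LinearMap.add_apply, inner_add_left, hadj, hadjb, hpsh, hpbsh,
      inner_zero_right, add_zero]
  have hxh : (inner ℂ (pb x) h : ℂ) = 0 := by
    rw [hadjb, hpbsh, inner_zero_right]
  have hh0 : h = 0 := by
    have e : (inner ℂ h h : ℂ) = 0 := by
      have e1 : (inner ℂ (h + pb x + pbs y) h : ℂ) = 0 := by rw [hsum]; exact hαh
      rw [hpbsy] at e1
      simpa [inner_add_left, hxh] using e1
    exact inner_self_eq_zero.mp e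
  have hαx : α = pb x := by
    rw [← hsum, hh0, hpbsy, zero_add, add_zero]
  -- decompose x w.r.t. the ∂-Laplacian
  have hmem2 : x ∈ ker (p ∘ₗ ps + ps ∘ₗ p) ⊔ range p ⊔ range ps := by
    rw [hdec]; trivial
  rw [Submodule.mem_sup] at hmem2
  obtain ⟨w2, hw2, c2, hc2, hsum2⟩ := hmem2
  rw [Submodule.mem_sup] at hw2
  obtain ⟨h2, hh2, bu, hbu, rfl⟩ := hw2
  obtain ⟨v, rfl⟩ := hc2
  obtain ⟨u, rfl⟩ := hbu
  -- pb h2 = 0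
  have hh2b : h2 ∈ ker (pb ∘ₗ pbs + pbs ∘ₗ pb) := by rw [← hker2]; exact hh2
  have hh2b' : pb (pbs h2) + pbs (pb h2) = 0 := by
    have := (mem_ker).mp hh2b
    simpa using this
  obtain ⟨hpbh2, _⟩ := harm_parts' pb pbs hadjb h2 hh2b'
  -- α = pb (p u) + pb (ps v)
  have hα2 : α = pb (p u) + pb (ps v) := by
    rw [hαx, ← hsum2]
    simp [map_add, hpbh2]
  -- pb (ps v) = 0
  have hpspbv : ps (pb v) = 0 := by
    apply as_zero' p ps hadj
    have h1 : (0 : V) = p (pb (p u)) + p (pb (ps v)) := by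
      rw [← hpα, hα2]; simp [map_add]
    have h2 : p (pb (p u)) = 0 := by rw [hanti' (p u), hp2, map_zero, neg_zero]
    rw [h2, zero_add] at h1
    have h3 : p (pb (ps v)) = 0 := h1.symm
    rw [hcomm' v, map_neg] at h3
    simpa using h3
  have hpbpsv : pb (ps v) = 0 := by rw [hcomm' v, hpspbv, neg_zero]
  refine ⟨-u, ?_⟩
  rw [hα2, hpbpsv, add_zero]
  simp only [LinearMap.comp_apply, map_neg]
  rw [hanti']
  simp
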